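/- Suppose (βₙ^±) are analytic functions on a disc with |∂βₙ^±/∂z(z)| ≤ εₙ on the segment [zₙ⁻, zₙ⁺], where εₙ → 0, and suppose |γₙ| ≤ 2(|βₙ⁻(zₙ*)| + |βₙ⁺(zₙ*)|) with zₙ* the midpoint of [zₙ⁻, zₙ⁺] and |γₙ| = |zₙ⁺ − zₙ⁻|. If t_{n_k}(z_{n_k}*) := |β⁻_{n_k}(z_{n_k}*)|/|β⁺_{n_k}(z_{n_k}*)| → 0 along a subsequence, then there exist ηₖ → 0 such that for all z in the segment [z_{n_k}⁻, z_{n_k}⁺], |β⁻_{n_k}(z)|/|β⁺_{n_k}(z)| ≤ ηₖ; in fact one may take ηₖ = (4ε_{n_k} + t_{n_k}(z_{n_k}*))/(1 − 4ε_{n_k}). -/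

import Mathlib

theorem stmt11 (βp βm : ℕ → ℂ → ℂ) (zm zp : ℕ → ℂ) (ε : ℕ → ℝ)
    (hε0 : ∀ n, 0 < ε n) (hεlim : Filter.Tendsto ε Filter.atTop (nhds 0))
    (hlip : ∀ n, ∀ z ∈ segment ℝ (zm n) (zp n),
      norm (βp n z - βp n ((zm n + zp n) / 2)) ≤ ε n * norm (zp n - zm n) ∧
      norm (βm n z - βm n ((zm n + zp n) / 2)) ≤ ε n * norm (zp n - zm n))
    (hγ : ∀ n, norm (zp n - zm n) ≤
      2 * (norm (βm n ((zm n + zp n) / 2)) + norm (βp n ((zm n + zp n) / 2))))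
    (nk : ℕ → ℕ) (hnk : StrictMono nk)
    (hne : ∀ᶠ k in Filter.atTop, βp (nk k) ((zm (nk k) + zp (nk k)) / 2) ≠ 0)
    (ht : Filter.Tendsto (fun k =>
        norm (βm (nk k) ((zm (nk k) + zp (nk k)) / 2)) /
          norm (βp (nk k) ((zm (nk k) + zp (nk k)) / 2)))
      Filter.atTop (nhds 0)) :
    ∃ η : ℕ → ℝ, Filter.Tendsto η Filter.atTop (nhds 0) ∧
      ∀ᶠ k in Filter.atTop, ∀ z ∈ segment ℝ (zm (nk k)) (zp (nk k)),
        norm (βm (nk k) z) ≤ η k * norm (βp (nk k) z) := by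
  have hεk : Filter.Tendsto (fun k => ε (nk k)) Filter.atTop (nhds 0) :=
    hεlim.comp hnk.tendsto_atTop
  set t : ℕ → ℝ := fun k =>
    norm (βm (nk k) ((zm (nk k) + zp (nk k)) / 2)) /
      norm (βp (nk k) ((zm (nk k) + zp (nk k)) / 2)) with ht_def
  refine ⟨fun k => (4 * ε (nk k) + t k) / (1 - 4 * ε (nk k)), ?_, ?_⟩
  · have h1 : Filter.Tendsto (fun k => 4 * ε (nk k) + t k) Filter.atTop (nhds 0) := by
      have := (hεk.const_mul 4).add ht
      simpa using this
    have h2 : Filter.Tendsto (fun k => 1 - 4 * ε (nk k)) Filter.atTop (nhds 1) := by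
      have := (hεk.const_mul 4).const_sub 1
      simpa using this
    rw [show (0:ℝ) = 0 / 1 by norm_num]; exact h1.div h2 one_ne_zero
  · have hεs : ∀ᶠ k in Filter.atTop, ε (nk k) < 1/8 :=
      hεk.eventually (gt_mem_nhds (by norm_num))
    have hts : ∀ᶠ k in Filter.atTop, t k < 1 :=
      ht.eventually (gt_mem_nhds one_pos)
    filter_upwards [hεs, hts, hne] with k hεk' htk hbk z hz
    set n := nk k with hn
    set zs := (zm n + zp n) / 2 with hzs
    set a := norm (βm n zs) with ha
    set b := norm (βp n zs) with hb'
    have hb : 0 < b := norm_pos_iff.mpr hbk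
    have htk' : a / b < 1 := htk
    have hab : a < b := (div_lt_one hb).mp htk'
    have ha0 : 0 ≤ a := norm_nonneg _
    obtain ⟨hp, hm⟩ := hlip n z hz
    have hγ' : norm (zp n - zm n) ≤ 4 * b := le_trans (hγ n) (by nlinarith)
    have hε' : 0 < ε n := hε0 n
    have hεlt : ε n < 1/8 := hεk'
    have hmz : norm (βm n z) ≤ a + 4 * ε n * b := by
      have h1 : norm (βm n z) - a ≤ norm (βm n z - βm n zs) :=
        norm_sub_norm_le _ _
      have h2 : norm (βm n z - βm n zs) ≤ ε n * (4 * b) :=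
        le_trans hm (by nlinarith)
      linarith
    have hpz : (1 - 4 * ε n) * b ≤ norm (βp n z) := by
      have h1 : b - norm (βp n z) ≤ norm (βp n zs - βp n z) :=
        norm_sub_norm_le _ _
      have h1' : norm (βp n zs - βp n z) = norm (βp n z - βp n zs) :=
        norm_sub_rev _ _
      have h2 : norm (βp n z - βp n zs) ≤ ε n * (4 * b) :=
        le_trans hp (by nlinarith)
      nlinarith
    have hηnn : 0 ≤ (4 * ε n + a / b) / (1 - 4 * ε n) := by
      apply div_nonneg
      · positivity
      · linarith
    have hd : (1:ℝ) - 4 * ε n ≠ 0 := by linarith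
    have hdiv : a / b * b = a := div_mul_cancel₀ _ hb.ne'
    have key : (4 * ε n + a / b) / (1 - 4 * ε n) * ((1 - 4 * ε n) * b) = 4 * ε n * b + a := by
      calc (4 * ε n + a / b) / (1 - 4 * ε n) * ((1 - 4 * ε n) * b)
          = (4 * ε n + a / b) / (1 - 4 * ε n) * (1 - 4 * ε n) * b := by ring
        _ = (4 * ε n + a / b) * b := by rw [div_mul_cancel₀ _ hd]
        _ = 4 * ε n * b + a / b * b := by ring
        _ = 4 * ε n * b + a := by rw [hdiv]
    calc norm (βm n z) ≤ a + 4 * ε n * b := hmz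
      _ = (4 * ε n + a / b) / (1 - 4 * ε n) * ((1 - 4 * ε n) * b) := by rw [key]; ring
      _ ≤ (4 * ε n + a / b) / (1 - 4 * ε n) * norm (βp n z) := by
          apply mul_le_mul_of_nonneg_left hpz hηnn
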